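/- Set S₁ = {(6−√3)/3, (6+√3)/3}, S₂ = {z ∈ ℂ : z³ − 6z² + 11z − 6 = 0} = {1, 2, 3} and S₃ = {∞}. Then for every nonconstant meromorphic function h on ℂ, the functions f = h + 4 and g = −h satisfy E_f(S_j, ∞) = E_g(S_j, ∞) for j = 1, 2, 3 (in particular E_f(S₁, 0) = E_g(S₁, 0), E_f(S₂, 3) = E_g(S₂, 3), E_f(S₃, 1) = E_g(S₃, 1)), yet f ≢ g. Hence the set S₂ in the three-set uniqueness theorem cannot be replaced by an arbitrary set of three elements. -/

import Mathlib

open Complex Filter MeasureTheory Metric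
open scoped Classical

/-- The order of a function at a point, as an integer (`0` if not meromorphic or of
order `⊤`, i.e. identically zero near the point). -/
noncomputable def mOrd (f : ℂ → ℂ) (z : ℂ) : ℤ :=
  if h : MeromorphicAt f z then ((meromorphicOrderAt f z).untopD 0) else 0

/-- Multiplicity of `z` as an `α`-point of `f`. -/
noncomputable def zMult (f : ℂ → ℂ) (α z : ℂ) : ℕ :=
  (mOrd (fun w => f w - α) z).toNat

/-- Multiplicity of `z` as a pole of `f`. -/
noncomputable def pMult (f : ℂ → ℂ) (z : ℂ) : ℕ :=
  (-(mOrd f z)).toNat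

/-- Pointwise contribution of `z` to the multiset `E_f(S, k)`:
an `α`-point (`α ∈ S`) of multiplicity `m` counts `m` times if `m ≤ k`, else `k+1` times. -/
noncomputable def Ecount (f : ℂ → ℂ) (S : Set ℂ) (k : ℕ) (z : ℂ) : ℕ :=
  ∑ᶠ α ∈ S, min (zMult f α z) (k + 1)

/-- `f` and `g` share the set `S ⊆ ℂ` with weight `k`, i.e. `E_f(S,k) = E_g(S,k)`. -/
def EshareEq (f g : ℂ → ℂ) (S : Set ℂ) (k : ℕ) : Prop :=
  ∀ z : ℂ, Ecount f S k z = Ecount g S k z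

/-- `f` and `g` share the set `S ⊆ ℂ` counting multiplicities (weight `∞`). -/
def EshareEqCM (f g : ℂ → ℂ) (S : Set ℂ) : Prop :=
  ∀ z : ℂ, (∑ᶠ α ∈ S, zMult f α z) = ∑ᶠ α ∈ S, zMult g α z

/-- `f` and `g` share `{∞}` with weight `k`. -/
def EpoleEq (f g : ℂ → ℂ) (k : ℕ) : Prop :=
  ∀ z : ℂ, min (pMult f z) (k + 1) = min (pMult g z) (k + 1)

/-- `f` and `g` share `{∞}` counting multiplicities. -/
def EpoleEqCM (f g : ℂ → ℂ) : Prop :=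
  ∀ z : ℂ, pMult f z = pMult g z

/-- Equality of meromorphic functions: `f ≡ g`, i.e. `f = g` off a countable set. -/
def MEq (f g : ℂ → ℂ) : Prop :=
  ∃ D : Set ℂ, D.Countable ∧ ∀ z ∉ D, f z = g z

/-- `f` is a nonconstant meromorphic function in the plane. -/
def MNonconst (f : ℂ → ℂ) : Prop :=
  MeromorphicOn f Set.univ ∧ ¬ ∃ c : ℂ, MEq f (fun _ => c)

/-- The unintegrated counting function of a pointwise (multiplicity) count `w`:
number of points in the closed disc of radius `t`, counted with `w`. -/
noncomputable def ncount (w : ℂ → ℕ) (t : ℝ) : ℕ :=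
  ∑ᶠ z ∈ closedBall (0 : ℂ) t, w z

/-- The integrated counting function associated to an unintegrated one. -/
noncomputable def integN (nf : ℝ → ℕ) (r : ℝ) : ℝ :=
  (∫ t in (0:ℝ)..r, ((nf t : ℝ) - (nf 0 : ℝ)) / t) + (nf 0 : ℝ) * Real.log r

/-- The Nevanlinna integrated counting function `N(r, f)` of the poles of `f`. -/
noncomputable def NN (f : ℂ → ℂ) (r : ℝ) : ℝ :=
  integN (ncount (pMult f)) r

/-- The Nevanlinna proximity function `m(r, f)`. -/
noncomputable def mprox (f : ℂ → ℂ) (r : ℝ) : ℝ :=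
  (2 * Real.pi)⁻¹ *
    ∫ θ in (0:ℝ)..(2 * Real.pi), Real.log (max ‖f (r * Complex.exp (θ * Complex.I))‖ 1)

/-- The Nevanlinna characteristic `T(r, f)`. -/
noncomputable def Tchar (f : ℂ → ℂ) (r : ℝ) : ℝ :=
  mprox f r + NN f r

/-- `u` is a quantity of type `S(r, h)` : `u r = o(T(r, h))` as `r → ∞`, outside a
possible exceptional set of finite linear measure. -/
def SmallWrt (h : ℂ → ℂ) (u : ℝ → ℝ) : Prop :=
  ∃ E : Set ℝ, volume E < ⊤ ∧
    Tendsto (fun r => u r / Tchar h r) (atTop ⊓ Filter.principal Eᶜ) (nhds 0)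



section AuxLemmas

lemma order_eq_order_of_funext {F G : ℂ → ℂ} {z : ℂ} (hF : MeromorphicAt F z)
    (hG : MeromorphicAt G z) (h : F = G) : meromorphicOrderAt F z = meromorphicOrderAt G z := by subst h; rfl

lemma order_neg' {F : ℂ → ℂ} {z : ℂ} (hF : MeromorphicAt F z)
    (hnF : MeromorphicAt (fun w => -F w) z) : meromorphicOrderAt (fun w => -F w) z = meromorphicOrderAt F z := by
  rcases eq_or_ne (meromorphicOrderAt F z) ⊤ with h | h
  · rw [h, meromorphicOrderAt_eq_top_iff]
    filter_upwards [meromorphicOrderAt_eq_top_iff.mp h] with w hw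
    simp [hw]
  · obtain ⟨n, hn⟩ := WithTop.ne_top_iff_exists.mp h
    rw [← hn]
    obtain ⟨g, hg, hg0, hge⟩ := (meromorphicOrderAt_eq_int_iff hF).mp hn.symm
    rw [meromorphicOrderAt_eq_int_iff hnF]
    refine ⟨fun w => -g w, hg.neg, by simpa using hg0, ?_⟩
    filter_upwards [hge] with w hw
    simp [hw, smul_eq_mul]

lemma order_add_const_of_neg {F : ℂ → ℂ} {z : ℂ} {c : ℂ} {n : ℤ} (hF : MeromorphicAt F z)
    (hFc : MeromorphicAt (fun w => F w + c) z) (hn : meromorphicOrderAt F z = (n : WithTop ℤ))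
    (hneg : n < 0) : meromorphicOrderAt (fun w => F w + c) z = (n : WithTop ℤ) := by
  obtain ⟨g, hg, hg0, hge⟩ := (meromorphicOrderAt_eq_int_iff hF).mp hn
  rw [meromorphicOrderAt_eq_int_iff hFc]
  refine ⟨fun w => g w + (w - z) ^ (-n).toNat * c, ?_, ?_, ?_⟩
  · exact hg.add ((((analyticAt_id.sub analyticAt_const).pow _).mul analyticAt_const))
  · have : (-n).toNat ≠ 0 := by omega
    simp [this, hg0]
  · filter_upwards [hge, self_mem_nhdsWithin] with w hw hwz
    have hsub : w - z ≠ 0 := sub_ne_zero.mpr hwz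
    have hpow : ((w - z) ^ (-n).toNat : ℂ) = (w - z) ^ (-n : ℤ) := by
      rw [← zpow_natCast]; congr 1; omega
    rw [hw]
    simp only [smul_eq_mul]
    rw [mul_add, hpow, ← mul_assoc, ← zpow_add₀ hsub]
    simp

lemma mOrd_eq {F : ℂ → ℂ} {z : ℂ} (hF : MeromorphicAt F z) :
    mOrd F z = (meromorphicOrderAt F z).untopD 0 := dif_pos hF

lemma mOrd_neg (F : ℂ → ℂ) (z : ℂ) : mOrd (fun w => -F w) z = mOrd F z := by
  by_cases hF : MeromorphicAt F z
  · have hnF : MeromorphicAt (fun w => -F w) z := hF.neg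
    rw [mOrd_eq hF, mOrd_eq hnF, order_neg' hF hnF]
  · have hnF : ¬ MeromorphicAt (fun w => -F w) z := by
      intro hc
      have := hc.neg
      simp only [Pi.neg_def, neg_neg] at this
      exact hF (by simpa [Pi.neg_def] using this)
    rw [mOrd, mOrd, dif_neg hF, dif_neg hnF]

lemma pMult_add_const (F : ℂ → ℂ) (c : ℂ) (z : ℂ) :
    pMult (fun w => F w + c) z = pMult F z := by
  by_cases hF : MeromorphicAt F z
  · have hFc : MeromorphicAt (fun w => F w + c) z := hF.add (.const c z)
    by_cases hex : ∃ n : ℤ, n < 0 ∧ meromorphicOrderAt F z = (n : WithTop ℤ)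
    · obtain ⟨n, hneg, hn⟩ := hex
      rw [pMult, pMult, mOrd_eq hF, mOrd_eq hFc,
        order_add_const_of_neg hF hFc hn hneg, hn]
    · have h1 : (-(mOrd F z)).toNat = 0 := by
        rw [mOrd_eq hF]
        rcases eq_or_ne (meromorphicOrderAt F z) ⊤ with h | h
        · simp [h]
        · obtain ⟨n, hn⟩ := WithTop.ne_top_iff_exists.mp h
          have : ¬ n < 0 := fun hlt => hex ⟨n, hlt, hn.symm⟩
          rw [← hn]; simp; omega
      have h2 : (-(mOrd (fun w => F w + c) z)).toNat = 0 := by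
        rw [mOrd_eq hFc]
        rcases eq_or_ne (meromorphicOrderAt (fun w => F w + c) z) ⊤ with h | h
        · simp [h]
        · obtain ⟨n, hn⟩ := WithTop.ne_top_iff_exists.mp h
          have hnn : ¬ n < 0 := by
            intro hlt
            have hFcc : MeromorphicAt (fun w => (F w + c) + -c) z := hFc.add (.const (-c) z)
            have := order_add_const_of_neg hFc hFcc hn.symm hlt
            have heq : meromorphicOrderAt (fun w => (F w + c) + -c) z = meromorphicOrderAt F z :=
              order_eq_order_of_funext hFcc hF (funext fun w => by ring)
            exact hex ⟨n, hlt, by rw [← heq, this]⟩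
          rw [← hn]; simp; omega
      rw [pMult, pMult, h1, h2]
  · have hFc : ¬ MeromorphicAt (fun w => F w + c) z := by
      intro hc
      have := hc.add (.const (-c) z)
      exact hF (by simpa using this.congr (by filter_upwards with w; simp))
    rw [pMult, pMult, mOrd, mOrd, dif_neg hF, dif_neg hFc]

lemma pMult_neg (F : ℂ → ℂ) (z : ℂ) : pMult (fun w => -F w) z = pMult F z := by
  rw [pMult, pMult, mOrd_neg]

lemma finsum_mem_pair' {a b : ℂ} (hab : a ≠ b) (W : ℂ → ℕ) :
    ∑ᶠ x ∈ ({a, b} : Set ℂ), W x = W a + W b := by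
  rw [show ({a, b} : Set ℂ) = (({a, b} : Finset ℂ) : Set ℂ) by simp,
    finsum_mem_coe_finset, Finset.sum_pair hab]

lemma finsum_mem_triple' {a b c : ℂ} (hab : a ≠ b) (hac : a ≠ c) (hbc : b ≠ c) (W : ℂ → ℕ) :
    ∑ᶠ x ∈ ({a, b, c} : Set ℂ), W x = W a + (W b + W c) := by
  rw [show ({a, b, c} : Set ℂ) = (({a, b, c} : Finset ℂ) : Set ℂ) by simp,
    finsum_mem_coe_finset, Finset.sum_insert (by simp [hab, hac]), Finset.sum_pair hbc]

lemma zMult_add_four (h : ℂ → ℂ) (α z : ℂ) :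
    zMult (fun w => h w + 4) α z = (mOrd (fun w => h w + (4 - α)) z).toNat := by
  rw [zMult, show (fun w => (fun u => h u + 4) w - α) = fun w => h w + (4 - α) from
    funext fun w => by ring]

lemma zMult_neg_fn (h : ℂ → ℂ) (β z : ℂ) :
    zMult (fun w => -h w) β z = (mOrd (fun w => h w + β) z).toNat := by
  rw [zMult, show (fun w => (fun u => -h u) w - β) = fun w => -(h w + β) from
    funext fun w => by ring, mOrd_neg]

end AuxLemmas

/-- **Example 1.4.** The set `S₂` cannot be arbitrary: with
`S₁ = {(6-√3)/3, (6+√3)/3}`, `S₂ = {z : z³ - 6z² + 11z - 6 = 0} = {1, 2, 3}`,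
`S₃ = {∞}`, the functions `f = h + 4` and `g = -h` share each `Sⱼ` counting
multiplicities (hence with weights `(0, 3, 1)`) for every nonconstant meromorphic `h`,
yet `f ≢ g`. -/
theorem example_arbitrary_set_fails_123 :
    ({z : ℂ | z ^ 3 - 6 * z ^ 2 + 11 * z - 6 = 0} = {1, 2, 3}) ∧
      ∀ h : ℂ → ℂ, MNonconst h →
        EshareEqCM (fun z => h z + 4) (fun z => -h z)
          {(6 - (Real.sqrt 3 : ℂ)) / 3, (6 + (Real.sqrt 3 : ℂ)) / 3} ∧
        EshareEqCM (fun z => h z + 4) (fun z => -h z)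
          {z : ℂ | z ^ 3 - 6 * z ^ 2 + 11 * z - 6 = 0} ∧
        EpoleEqCM (fun z => h z + 4) (fun z => -h z) ∧
        EshareEq (fun z => h z + 4) (fun z => -h z)
          {(6 - (Real.sqrt 3 : ℂ)) / 3, (6 + (Real.sqrt 3 : ℂ)) / 3} 0 ∧
        EshareEq (fun z => h z + 4) (fun z => -h z)
          {z : ℂ | z ^ 3 - 6 * z ^ 2 + 11 * z - 6 = 0} 3 ∧
        EpoleEq (fun z => h z + 4) (fun z => -h z) 1 ∧
        ¬ MEq (fun z => h z + 4) (fun z => -h z) := by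
  have hs3 : (Real.sqrt 3 : ℂ) ≠ 0 := by
    exact_mod_cast Complex.ofReal_ne_zero.mpr (by positivity)
  set a : ℂ := (6 - (Real.sqrt 3 : ℂ)) / 3 with ha
  set b : ℂ := (6 + (Real.sqrt 3 : ℂ)) / 3 with hb
  have hab : a ≠ b := by
    intro hc
    apply hs3
    rw [ha, hb] at hc
    linear_combination (-3/2 : ℂ) * hc
  have h4a : (4 : ℂ) - a = b := by rw [ha, hb]; ring
  have h4b : (4 : ℂ) - b = a := by rw [ha, hb]; ring
  have hset : {z : ℂ | z ^ 3 - 6 * z ^ 2 + 11 * z - 6 = 0} = {1, 2, 3} := by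
    ext z
    have hfac : z ^ 3 - 6 * z ^ 2 + 11 * z - 6 = (z - 1) * ((z - 2) * (z - 3)) := by ring
    simp only [Set.mem_setOf_eq, Set.mem_insert_iff, Set.mem_singleton_iff]
    rw [hfac, mul_eq_zero, mul_eq_zero, sub_eq_zero, sub_eq_zero, sub_eq_zero]
  refine ⟨hset, fun h hnc => ?_⟩
  have hpcm : EpoleEqCM (fun z => h z + 4) (fun z => -h z) := fun z => by
    rw [pMult_add_const h 4 z, pMult_neg h z]
  refine ⟨?_, ?_, hpcm, ?_, ?_, fun z => by rw [hpcm z], ?_⟩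
  · intro z
    rw [finsum_mem_pair' hab, finsum_mem_pair' hab, zMult_add_four, zMult_add_four,
      zMult_neg_fn, zMult_neg_fn, h4a, h4b]
    exact Nat.add_comm _ _
  · rw [hset]
    intro z
    rw [finsum_mem_triple' (by norm_num) (by norm_num) (by norm_num),
      finsum_mem_triple' (by norm_num) (by norm_num) (by norm_num)]
    simp only [zMult_add_four, zMult_neg_fn]
    norm_num
    omega
  · intro z
    rw [Ecount, Ecount, finsum_mem_pair' hab, finsum_mem_pair' hab, zMult_add_four,
      zMult_add_four, zMult_neg_fn, zMult_neg_fn, h4a, h4b]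
    exact Nat.add_comm _ _
  · rw [hset]
    intro z
    rw [Ecount, Ecount, finsum_mem_triple' (by norm_num) (by norm_num) (by norm_num),
      finsum_mem_triple' (by norm_num) (by norm_num) (by norm_num)]
    simp only [zMult_add_four, zMult_neg_fn]
    norm_num
    omega
  · rintro ⟨D, hD, hq⟩
    refine hnc.2 ⟨-2, D, hD, fun z hz => ?_⟩
    have := hq z hz
    simp only at this
    linear_combination this / 2
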